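/- arXiv:1701.01677 — 5 statements merged into one kernel-verified Lean document; each statement's English description precedes it below -/
import Mathlib

section
/- Let N = {1, ..., n} with n ≥ 2 and let Γ be the directed cycle on N with edge set {(i, i+1) : i = 1, ..., n-1} ∪ {(n, 1)}. Then a permutation π of N is consistent with Γ if and only if π = π_k for some k ∈ N, where π_k is the permutation that lists the players in the order (k-1, k-2, ..., k+1, k) (indices taken modulo n), i.e., π_k assigns to player k+j (mod n) the position n - j for j = 0, 1, ..., n-1. In particular there are exactly n permutations consistent with the directed n-cycle. -/
/-- Edge relation of the directed cycle `(1, 2, ..., n, 1)` on `Fin n`: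
there is a directed edge from `i` to `i + 1` (mod `n`). -/
def cycleEdge (n : ℕ) [NeZero n] (i j : Fin n) : Prop := j = i + 1

/-- `j` is a successor of `i` in the restriction of the cycle digraph to the
coalition `S`, i.e. there is a directed path from `i` to `j` using only
players of `S`. -/
def isSuccessorIn (n : ℕ) [NeZero n] (S : Set (Fin n)) (i j : Fin n) : Prop :=
  Relation.TransGen (fun a b => a ∈ S ∧ b ∈ S ∧ cycleEdge n a b) i j

/-- `i` dominates `j` in the restriction of the cycle digraph to `S`:
`j` is a successor of `i` but `i` is not a successor of `j`. -/
def dominatesIn (n : ℕ) [NeZero n] (S : Set (Fin n)) (i j : Fin n) : Prop :=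
  isSuccessorIn n S i j ∧ ¬ isSuccessorIn n S j i

/-- `P̄_π(i)`: the set of players whose position under `π` is at most that of `i`
(including `i` itself). -/
def Pbar {n : ℕ} (π : Equiv.Perm (Fin n)) (i : Fin n) : Set (Fin n) := {j | π j ≤ π i}

/-- `P_π(i)`: the set of players whose position under `π` is strictly less than
that of `i`. -/
def Pset {n : ℕ} (π : Equiv.Perm (Fin n)) (i : Fin n) : Set (Fin n) := {j | π j < π i}

/-- A permutation `π` is consistent with the directed cycle on `Fin n` if for
every player `i`, no player `j ∈ P̄_π(i)` dominates `i` in the restriction of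
the cycle digraph to `P̄_π(i)`. -/
def consistent (n : ℕ) [NeZero n] (π : Equiv.Perm (Fin n)) : Prop :=
  ∀ i : Fin n, ∀ j ∈ Pbar π i, ¬ dominatesIn n (Pbar π i) j i

/-- The permutation `π_k` that lists the players in the order
`(k-1, k-2, ..., k+1, k)` (indices mod `n`), i.e. it assigns to player
`k + j` the position `n - 1 - j` (zero-indexed) for `j = 0, ..., n-1`;
explicitly, `π_k i = k - 1 - i`. -/
def cyclePerm (n : ℕ) [NeZero n] (k : Fin n) : Equiv.Perm (Fin n) :=
  Equiv.subLeft (k - 1)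

open Fin.NatCast Fin.CommRing

section Aux

variable {n : ℕ} [NeZero n]

/-- If the unique in-neighbour `i - 1` of `i` is not in `S`, then nothing has a
path to `i` inside `S`. -/
lemma not_succ_target {S : Set (Fin n)} {i : Fin n} (h : i - 1 ∉ S) (j : Fin n) :
    ¬ isSuccessorIn n S j i := by
  intro hsucc
  have key : ∀ a : Fin n, (a ∈ S ∧ i ∈ S ∧ cycleEdge n a i) → False := by
    rintro a ⟨ha, -, he⟩
    apply h
    have hia : i - 1 = a := by rw [he]; ring
    rwa [hia]
  cases hsucc with
  | single h1 => exact key _ h1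
  | tail _ h1 => exact key _ h1

/-- If all of `i, i-1, ..., i-m` are in `S`, there is a path from `i - m` to `i`. -/
lemma succ_chain {S : Set (Fin n)} {i : Fin n} :
    ∀ m : ℕ, 1 ≤ m → (∀ l : ℕ, l ≤ m → i - (l : Fin n) ∈ S) →
      isSuccessorIn n S (i - (m : Fin n)) i := by
  intro m
  induction m with
  | zero => intro h; omega
  | succ m ih =>
    intro _ hmem
    rcases Nat.eq_zero_or_pos m with hm | hm
    · subst hm
      apply Relation.TransGen.single
      refine ⟨hmem 1 le_rfl, by simpa using hmem 0 (by omega), ?_⟩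
      show i = i - ((1:ℕ) : Fin n) + 1
      push_cast
      ring
    · have step : isSuccessorIn n S (i - (m : Fin n)) i :=
        ih hm (fun l hl => hmem l (by omega))
      refine Relation.TransGen.head ⟨hmem (m+1) le_rfl, hmem m (by omega), ?_⟩ step
      show i - ((m : Fin n)) = i - (((m+1 : ℕ)) : Fin n) + 1
      push_cast
      ring

/-- In the full cycle everybody is a successor of everybody. -/
lemma succ_univ (i j : Fin n) : isSuccessorIn n (Set.univ : Set (Fin n)) i j := by
  rcases eq_or_ne i j with rfl | hne
  · have h := succ_chain (S := (Set.univ : Set (Fin n))) (i := i) n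
      (Nat.one_le_iff_ne_zero.mpr (NeZero.ne n)) (fun l _ => Set.mem_univ _)
    simpa [Fin.natCast_self] using h
  · have hzero : j - i ≠ 0 := sub_ne_zero.mpr (Ne.symm hne)
    have h1 : 1 ≤ (j - i).val := by
      rcases Nat.eq_zero_or_pos (j - i).val with h0 | h0
      · exact absurd (Fin.ext (by simpa [Fin.val_zero] using h0)) hzero
      · exact h0
    have h := succ_chain (S := (Set.univ : Set (Fin n))) (i := j) ((j - i).val) h1
      (fun l _ => Set.mem_univ _)
    rwa [Fin.cast_val_eq_self, sub_sub_cancel] at h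

/-- If `i` and `i - 1` are in `S` but some `c` is not, then somebody in `S`
dominates `i` in `S` (namely the start of the maximal arc containing `i`). -/
lemma exists_dominator {S : Set (Fin n)} {i c : Fin n} (hi : i ∈ S) (hi1 : i - 1 ∈ S)
    (hc : c ∉ S) : ∃ s ∈ S, dominatesIn n S s i := by
  classical
  have hP : ∃ m : ℕ, i - (m : Fin n) ∉ S :=
    ⟨(i - c).val, by rwa [Fin.cast_val_eq_self, sub_sub_cancel]⟩
  set t := Nat.find hP with ht
  have htspec : i - (t : Fin n) ∉ S := Nat.find_spec hP
  have hmin : ∀ l, l < t → i - (l : Fin n) ∈ S := by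
    intro l hl
    have hfind := Nat.find_min hP (ht ▸ hl)
    exact not_not.mp hfind
  have ht0 : t ≠ 0 := by
    intro h
    rw [h] at htspec
    simp only [Nat.cast_zero, sub_zero] at htspec
    exact htspec hi
  have ht1 : t ≠ 1 := by
    intro h
    rw [h] at htspec
    simp only [Nat.cast_one] at htspec
    exact htspec hi1
  refine ⟨i - ((t-1 : ℕ) : Fin n), hmin (t-1) (by omega), ?_, ?_⟩
  · exact succ_chain (t-1) (by omega) (fun l hl => hmin l (by omega))
  · apply not_succ_target
    have hcast : ((t-1:ℕ) : Fin n) + 1 = ((t:ℕ) : Fin n) := by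
      conv_rhs => rw [show t = (t-1)+1 from by omega]
      push_cast
      ring
    have hEq : i - ((t-1:ℕ) : Fin n) - 1 = i - ((t:ℕ) : Fin n) := by
      rw [← hcast]; ring
    rw [hEq]
    exact htspec

/-- Forward direction: a consistent permutation is one of the `cyclePerm`s. -/
lemma consistent_forward (hn : 2 ≤ n) (π : Equiv.Perm (Fin n)) (hcons : consistent n π) :
    ∃ k : Fin n, π = cyclePerm n k := by
  have hn0 : 0 < n := by omega
  set top : Fin n := ⟨n-1, by omega⟩ with htop
  set L := π.symm top with hLdef
  have hπL : π L = top := π.apply_symm_apply top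
  have hvtop : (top : Fin n).val = n - 1 := rfl
  -- local monotonicity forced by consistency
  have hC : ∀ i : Fin n, (π i).val < n - 1 → (π i).val < (π (i - 1)).val := by
    intro i hi
    by_contra hle
    push_neg at hle
    have hmem : i - 1 ∈ Pbar π i := by
      simp only [Pbar, Set.mem_setOf_eq, Fin.le_def]
      exact hle
    have hcL : L ∉ Pbar π i := by
      simp only [Pbar, Set.mem_setOf_eq, hπL, not_le, Fin.lt_def]
      exact hi
    have hiS : i ∈ Pbar π i := by
      simp only [Pbar, Set.mem_setOf_eq]
      exact le_refl _
    obtain ⟨s, hs, hdom⟩ := exists_dominator hiS hmem hcL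
    exact hcons i s hs hdom
  -- upper bound along the backward walk from L
  have hub : ∀ m : ℕ, m ≤ n - 1 → (π (L + (m : Fin n))).val ≤ n - 1 - m := by
    intro m
    induction m with
    | zero =>
      intro _
      simp [hπL, hvtop]
    | succ m ih =>
      intro hm
      have ihm := ih (by omega)
      have hcastne : ((m+1 : ℕ) : Fin n) ≠ 0 := by
        intro h
        have := congrArg Fin.val h
        rw [Fin.val_cast_of_lt (by omega), Fin.val_zero] at this
        omega
      have hne : L + ((m+1 : ℕ) : Fin n) ≠ L := by
        intro h
        exact hcastne (by
          have := congrArg (fun x => x - L) h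
          simpa using this)
      have hlt : (π (L + ((m+1:ℕ) : Fin n))).val < n - 1 := by
        have h1 : π (L + ((m+1:ℕ):Fin n)) ≠ top := fun h => hne (π.injective (h.trans hπL.symm))
        have h2 : (π (L + ((m+1:ℕ):Fin n))).val < n := (π _).isLt
        rcases Nat.lt_or_ge (π (L + ((m+1:ℕ):Fin n))).val (n-1) with h | h
        · exact h
        · exact absurd (Fin.ext (by omega : (π (L + ((m+1:ℕ):Fin n))).val = (top : Fin n).val)) h1
      have hstep := hC _ hlt
      have heq : L + ((m+1:ℕ) : Fin n) - 1 = L + (m : Fin n) := by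
        push_cast
        ring
      rw [heq] at hstep
      omega
  -- exact values by downward induction
  have hexact : ∀ j : ℕ, j ≤ n - 1 → (π (L + ((n-1-j : ℕ) : Fin n))).val = j := by
    intro j
    induction j using Nat.strong_induction_on with
    | _ j ih =>
      intro hj
      have h1 : (π (L + ((n-1-j:ℕ) : Fin n))).val ≤ j := by
        have := hub (n-1-j) (by omega)
        omega
      by_contra hne
      have hv : (π (L + ((n-1-j:ℕ):Fin n))).val < j := by omega
      set v := (π (L + ((n-1-j:ℕ):Fin n))).val with hvdef
      have h2 := ih v hv (by omega)
      have h3 : π (L + ((n-1-j:ℕ):Fin n)) = π (L + ((n-1-v:ℕ):Fin n)) :=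
        Fin.ext (by rw [h2])
      have h4 := π.injective h3
      have h5 : ((n-1-j:ℕ):Fin n) = ((n-1-v:ℕ):Fin n) := by
        have := congrArg (fun x => x - L) h4
        simpa using this
      have h6 := congrArg Fin.val h5
      rw [Fin.val_cast_of_lt (by omega), Fin.val_cast_of_lt (by omega)] at h6
      omega
  refine ⟨L, ?_⟩
  apply Equiv.ext
  intro i
  set m := (i - L).val with hmdef
  have hm : m ≤ n - 1 := by
    have := (i - L).isLt
    omega
  have hi : i = L + (m : Fin n) := by
    rw [hmdef, Fin.cast_val_eq_self]
    ring
  have hval : (π i).val = n - 1 - m := by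
    have := hexact (n-1-m) (by omega)
    rw [show n-1-(n-1-m) = m from by omega] at this
    rw [hi]
    exact this
  have e1 : π i = ((n-1-m : ℕ) : Fin n) := by
    rw [← hval, Fin.cast_val_eq_self]
  have e2 : ((n-1-m:ℕ) : Fin n) + ((m+1 : ℕ) : Fin n) = 0 := by
    rw [← Nat.cast_add, show n-1-m+(m+1) = n from by omega, Fin.natCast_self]
  have e3 : -(((m+1 : ℕ)) : Fin n) = ((n-1-m:ℕ) : Fin n) := neg_eq_of_add_eq_zero_left e2
  have e4 : cyclePerm n L i = -(((m+1 : ℕ)) : Fin n) := by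
    simp only [cyclePerm, Equiv.subLeft_apply]
    rw [hi]
    push_cast
    ring
  rw [e1, e4, e3]

end Aux

/-- A permutation of `N = Fin n` is consistent with the directed `n`-cycle if and
only if it equals `π_k` for some `k`; in particular there are exactly `n`
permutations consistent with the directed `n`-cycle. -/
theorem cycle_consistent_iff (n : ℕ) [NeZero n] (hn : 2 ≤ n) :
    (∀ π : Equiv.Perm (Fin n), consistent n π ↔ ∃ k : Fin n, π = cyclePerm n k) ∧
      Set.ncard {π : Equiv.Perm (Fin n) | consistent n π} = n := by
  have hiff : ∀ π : Equiv.Perm (Fin n), consistent n π ↔ ∃ k : Fin n, π = cyclePerm n k := by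
    intro π
    constructor
    · exact consistent_forward hn π
    · rintro ⟨k, rfl⟩
      intro i j hj hdom
      by_cases hi : (cyclePerm n k i).val = n - 1
      · have huniv : Pbar (cyclePerm n k) i = Set.univ := by
          ext a
          simp only [Pbar, Set.mem_setOf_eq, Set.mem_univ, iff_true, Fin.le_def, hi]
          have := (cyclePerm n k a).isLt
          omega
        rw [huniv] at hdom
        exact hdom.2 (succ_univ i j)
      · have hpred : i - 1 ∉ Pbar (cyclePerm n k) i := by
          simp only [Pbar, Set.mem_setOf_eq, not_le]
          have heq : cyclePerm n k (i - 1) = cyclePerm n k i + 1 := by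
            simp only [cyclePerm, Equiv.subLeft_apply]
            ring
          have h1 : (cyclePerm n k i).val < n := (cyclePerm n k i).isLt
          have hval1 : (cyclePerm n k i + 1).val = (cyclePerm n k i).val + 1 := by
            rw [Fin.val_add, Fin.val_one' n, Nat.mod_eq_of_lt (show 1 < n by omega),
              Nat.mod_eq_of_lt (by omega)]
          rw [heq, Fin.lt_def, hval1]
          omega
        exact not_succ_target hpred j hdom.1
  refine ⟨hiff, ?_⟩
  have hset : {π : Equiv.Perm (Fin n) | consistent n π} = Set.range (cyclePerm n) := by
    ext π
    simp only [Set.mem_setOf_eq, Set.mem_range, hiff π]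
    exact ⟨fun ⟨k, h⟩ => ⟨k, h.symm⟩, fun ⟨k, h⟩ => ⟨k, h.symm⟩⟩
  have hinj : Function.Injective (cyclePerm n) := by
    intro a b hab
    have h := congrArg (fun e : Equiv.Perm (Fin n) => e 0) hab
    simp only [cyclePerm, Equiv.subLeft_apply, sub_zero] at h
    exact sub_left_inj.mp h
  rw [hset, ← Nat.card_coe_set_eq, Nat.card_range_of_injective hinj,
    Nat.card_eq_fintype_card, Fintype.card_fin]
end

section
/- Let N = {1, ..., n} with n ≥ 2 and let Γ be the directed cycle on N with edge set {(i, i+1) : i = 1, ..., n-1} ∪ {(n, 1)}. Then the number of permutations of N that are consistent with Γ equals n. -/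
namespace CycleAux

open Fin.NatCast Fin.CommRing

variable {n : ℕ} [NeZero n]

lemma neg_one_val (hn : 2 ≤ n) : ((-1 : Fin n)).val = n - 1 := by
  have h1 : (1:ℕ) % n = 1 := Nat.mod_eq_of_lt (by omega)
  simp [Fin.neg_def, h1]

/-- A path from `i` to `j` in the restricted cycle yields a chain
`i, i+1, ..., i+k = j` contained in `S`. -/
lemma succ_chain {S : Set (Fin n)} {i j : Fin n} (h : isSuccessorIn n S i j) :
    ∃ k : ℕ, 1 ≤ k ∧ j = i + (k : Fin n) ∧ ∀ t ≤ k, i + (t : Fin n) ∈ S := by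
  induction h with
  | single h =>
    obtain ⟨hi, hj, he⟩ := h
    refine ⟨1, le_refl _, by simpa [cycleEdge] using he, ?_⟩
    intro t ht
    interval_cases t
    · simpa using hi
    · rw [cycleEdge] at he; simpa [← he] using hj
  | tail _ h ih =>
    obtain ⟨k, hk1, hbk, hchain⟩ := ih
    obtain ⟨hb, hj, he⟩ := h
    rw [cycleEdge] at he
    refine ⟨k+1, by omega, ?_, ?_⟩
    · rw [he, hbk]; push_cast; ring
    · intro t ht
      rcases Nat.lt_or_ge t (k+1) with h' | h'
      · exact hchain t (by omega)
      · have ht' : t = k+1 := by omega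
        subst ht'
        have step : i + ((k+1 : ℕ) : Fin n) = i + (k:Fin n) + 1 := by push_cast; ring
        rw [step, ← hbk, ← he]; exact hj

/-- Conversely, a chain contained in `S` yields a path. -/
lemma chain_succ {S : Set (Fin n)} {i : Fin n} :
    ∀ k : ℕ, 1 ≤ k → (∀ t ≤ k, i + (t : Fin n) ∈ S) →
      isSuccessorIn n S i (i + (k : Fin n)) := by
  intro k
  induction k with
  | zero => omega
  | succ k ih =>
    intro _ hchain
    rcases Nat.eq_zero_or_pos k with hk | hk
    · subst hk
      refine Relation.TransGen.single ⟨by simpa using hchain 0 (by omega), hchain 1 le_rfl, ?_⟩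
      simp [cycleEdge]
    · have step : i + ((k+1 : ℕ) : Fin n) = i + (k:Fin n) + 1 := by push_cast; ring
      refine Relation.TransGen.tail (ih hk fun t ht => hchain t (by omega)) ?_
      exact ⟨hchain k (by omega), hchain (k+1) le_rfl, step⟩

/-- In the full coalition, everyone is a successor of everyone. -/
lemma succ_univ (hn : 2 ≤ n) (i j : Fin n) : isSuccessorIn n Set.univ i j := by
  have h := chain_succ (S := Set.univ) (i := i) ((j - i).val + n) (by omega) (fun t _ => trivial)
  have heq : i + (((j - i).val + n : ℕ) : Fin n) = j := by
    push_cast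
    simp [Fin.cast_val_eq_self]
  rwa [heq] at h

/-- A path ending at `i` forces the cyclic predecessor `i - 1` to lie in `S`. -/
lemma pred_mem {S : Set (Fin n)} {j i : Fin n} (h : isSuccessorIn n S j i) :
    i - 1 ∈ S := by
  rw [isSuccessorIn, Relation.TransGen.tail'_iff] at h
  obtain ⟨b, _, hb, _, he⟩ := h
  rw [cycleEdge] at he; subst he
  simpa using hb

/-- If there is a path from `i` all the way around to `i - 1` inside `S`,
then `S` is the whole player set. -/
lemma path_to_pred (hn : 2 ≤ n) {S : Set (Fin n)} {i : Fin n}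
    (h : isSuccessorIn n S i (i - 1)) : S = Set.univ := by
  obtain ⟨k, hk1, hbk, hchain⟩ := succ_chain h
  have hkneg : (k : Fin n) = -1 := by linear_combination -hbk
  have hkval : k % n = n - 1 := by
    have := congrArg Fin.val hkneg
    rwa [Fin.val_natCast, neg_one_val hn] at this
  have hkge : n - 1 ≤ k := by
    rcases Nat.lt_or_ge k (n-1) with h' | h'
    · rw [Nat.mod_eq_of_lt (by omega)] at hkval; omega
    · exact h'
  ext x
  simp only [Set.mem_univ, iff_true]
  have hx : x = i + (((x - i).val : ℕ) : Fin n) := by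
    simp [Fin.cast_val_eq_self]
  rw [hx]
  exact hchain (x - i).val (by have := (x - i).isLt; omega)

/-- The permutation `i ↦ a - 1 - i`, which lists the players in the order
`a, a - 1, a - 2, ..., a + 1` reversed, i.e. positions decrease along the cycle
with `a` placed last. -/
def pc (a : Fin n) : Equiv.Perm (Fin n) :=
  Function.Involutive.toPerm (fun i => a - 1 - i) (fun i => by ring_nf)

@[simp] lemma pc_apply (a i : Fin n) : pc a i = a - 1 - i := rfl

lemma pc_a (a : Fin n) : pc a a = -1 := by show a - 1 - a = -1; ring

lemma le_neg_one (hn : 2 ≤ n) (x : Fin n) : x ≤ -1 := by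
  rw [Fin.le_def, neg_one_val hn]
  exact Nat.le_sub_one_of_lt x.isLt

lemma val_add_one {x : Fin n} (hn : 2 ≤ n) (hx : x.val < n - 1) : (x + 1).val = x.val + 1 := by
  rw [Fin.add_def, Fin.val_one', Nat.mod_eq_of_lt (show 1 < n by omega)]
  exact Nat.mod_eq_of_lt (by omega)

/-- Each `pc a` is consistent. -/
lemma pc_consistent (hn : 2 ≤ n) (a : Fin n) : consistent n (pc a) := by
  intro i j hj hdom
  by_cases hia : i = a
  · have huniv : Pbar (pc a) i = Set.univ := by
      ext x; simp only [Pbar, Set.mem_setOf_eq, Set.mem_univ, iff_true, hia, pc_a]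
      exact le_neg_one hn _
    rw [huniv] at hdom
    exact hdom.2 (succ_univ hn i j)
  · have hmem : i - 1 ∈ Pbar (pc a) i := pred_mem hdom.1
    have hval : pc a i ≠ -1 := by
      intro h
      exact hia ((pc a).injective (h.trans (pc_a a).symm))
    have hlt : (pc a i).val < n - 1 := by
      rcases Nat.lt_or_ge (pc a i).val (n-1) with h' | h'
      · exact h'
      · exfalso; apply hval; apply Fin.ext
        rw [neg_one_val hn]
        have := (pc a i).isLt; omega
    have heq : pc a (i - 1) = pc a i + 1 := by show a - 1 - (i-1) = a - 1 - i + 1; ring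
    have hij : (pc a (i-1)).val ≤ (pc a i).val := hmem
    rw [heq, val_add_one hn hlt] at hij
    omega

/-- A consistent permutation is determined: it equals `pc a` where `a` is the
last-placed player. -/
lemma consistent_eq (hn : 2 ≤ n) {π : Equiv.Perm (Fin n)} (hc : consistent n π) :
    π = pc (π.symm (-1)) := by
  set a := π.symm (-1) with ha
  have hstep : ∀ i : Fin n, i ≠ a → (π i).val < (π (i - 1)).val := by
    intro i hia
    by_contra hle
    push_neg at hle
    have hmem : i - 1 ∈ Pbar π i := by
      rw [Pbar, Set.mem_setOf_eq, Fin.le_def]; exact hle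
    apply hc i (i-1) hmem
    constructor
    · exact Relation.TransGen.single ⟨hmem, le_refl (π i), by simp [cycleEdge]⟩
    · intro hpath
      have huniv := path_to_pred hn hpath
      have hmem2 : a ∈ Pbar π i := huniv ▸ Set.mem_univ a
      have hle' : (-1 : Fin n) ≤ π i := by
        have h' : π a ≤ π i := hmem2
        rwa [ha, Equiv.apply_symm_apply] at h'
      have hpi : π i = -1 := le_antisymm (le_neg_one hn _) hle'
      exact hia (by rw [ha, ← hpi, Equiv.symm_apply_apply])
  set v : ℕ → ℕ := fun t => (π (a + (t : Fin n))).val with hv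
  have hv0 : v 0 = n - 1 := by
    simp only [hv, Nat.cast_zero, add_zero, ha, Equiv.apply_symm_apply]
    exact neg_one_val hn
  have hvstep : ∀ t : ℕ, t + 1 < n → v (t+1) < v t := by
    intro t ht
    have hne : a + ((t+1 : ℕ) : Fin n) ≠ a := by
      intro h
      have h0 : ((t+1 : ℕ) : Fin n) = 0 := by linear_combination h
      have h1 := congrArg Fin.val h0
      rw [Fin.val_natCast, Fin.val_zero, Nat.mod_eq_of_lt ht] at h1
      omega
    have hpred : a + ((t+1 : ℕ) : Fin n) - 1 = a + (t : Fin n) := by push_cast; ring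
    have := hstep _ hne
    rwa [hpred] at this
  have hupper : ∀ t, t < n → v t ≤ n - 1 - t := by
    intro t
    induction t with
    | zero => intro _; omega
    | succ t ih =>
      intro ht
      have := hvstep t ht
      have := ih (by omega)
      omega
  have hlower : ∀ s t, t + s = n - 1 → s ≤ v t := by
    intro s
    induction s with
    | zero => intro t _; omega
    | succ s ih =>
      intro t ht
      have h1 := hvstep t (by omega)
      have h2 := ih (t+1) (by omega)
      omega
  have hveq : ∀ t, t < n → v t = n - 1 - t := by
    intro t ht
    have := hupper t ht
    have := hlower (n - 1 - t) t (by omega)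
    omega
  have hpc : ∀ t : ℕ, t < n → (pc a (a + (t:Fin n))).val = n - 1 - t := by
    intro t ht
    have h1 : pc a (a + (t:Fin n)) = -1 - (t : Fin n) := by
      show a - 1 - (a + (t:Fin n)) = -1 - (t:Fin n); ring
    rw [h1, Fin.sub_def]
    simp only [Fin.val_natCast, neg_one_val hn, Nat.mod_eq_of_lt ht]
    have h2 : n - t + (n - 1) = (n - 1 - t) + n := by omega
    rw [h2, Nat.add_mod_right, Nat.mod_eq_of_lt (by omega)]
  ext x
  have hlt := (x - a).isLt
  have hx : a + (((x - a).val : ℕ) : Fin n) = x := by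
    rw [Fin.cast_val_eq_self]; ring
  have h1 := hveq (x-a).val hlt
  have h2 := hpc (x-a).val hlt
  rw [hx] at h2
  simp only [hv, hx] at h1
  exact h1.trans h2.symm

lemma pc_injective : Function.Injective (pc (n := n)) := by
  intro a b hab
  have := congrArg (fun e : Equiv.Perm (Fin n) => e 0 + 1) hab
  simpa [pc_apply] using this

end CycleAux

/-- The number of permutations of `N = Fin n` consistent with the directed
`n`-cycle equals `n`. -/
theorem card_cycle_consistent (n : ℕ) [NeZero n] (hn : 2 ≤ n) :
    Set.ncard {π : Equiv.Perm (Fin n) | consistent n π} = n := by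
  have hset : {π : Equiv.Perm (Fin n) | consistent n π} = Set.range (CycleAux.pc (n := n)) := by
    ext π
    constructor
    · intro hπ
      exact ⟨π.symm (-1), (CycleAux.consistent_eq hn hπ).symm⟩
    · rintro ⟨a, rfl⟩
      exact CycleAux.pc_consistent hn a
  rw [hset, ← Set.image_univ, Set.ncard_image_of_injective _ CycleAux.pc_injective,
    Set.ncard_univ, Nat.card_eq_fintype_card, Fintype.card_fin]
end

section
/- Let N = {1, ..., n} with n ≥ 2, let Γ be the directed cycle on N with edge set {(i, i+1) : i = 1, ..., n-1} ∪ {(n, 1)}, let f : ℤ_{≥0} → ℝ, and define v_f : 2^N → ℝ by v_f(S) = f(|S|). Then for every player i ∈ N, the sum over all permutations π consistent with Γ of the marginal contribution of i, namely Σ_{π ∈ Π^Γ} (v_f(P̄_π(i)) − v_f(P_π(i))), equals Σ_{j=1}^{n} (f(j) − f(j−1)) = f(n) − f(0). -/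
section Aux

open scoped Fin.NatCast Fin.CommRing

variable {n : ℕ} [NeZero n]

/-- A path in the restricted cycle digraph travels along the cycle: it reaches
`i + m` for some `m ≥ 1`, and all intermediate players lie in `S`. -/
lemma aux_succ_path {S : Set (Fin n)} {i j : Fin n} (h : isSuccessorIn n S i j) :
    ∃ m : ℕ, 1 ≤ m ∧ j = i + (m : Fin n) ∧ ∀ t : ℕ, t ≤ m → i + (t : Fin n) ∈ S := by
  induction h with
  | single hr =>
    refine ⟨1, le_refl 1, by rw [hr.2.2]; simp [cycleEdge], ?_⟩
    intro t ht
    interval_cases t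
    · simpa using hr.1
    · have := hr.2.1; rw [hr.2.2] at this; simpa using this
  | tail hab hr ih =>
    obtain ⟨m, hm1, heq, hmem⟩ := ih
    refine ⟨m + 1, by omega, ?_, ?_⟩
    · rw [hr.2.2, heq]; push_cast; ring
    · intro t ht
      rcases Nat.lt_or_ge t (m+1) with h | h
      · exact hmem t (by omega)
      · have : t = m + 1 := by omega
        subst this
        have : i + ((m:ℕ)+1 : ℕ) = i + (m : Fin n) + 1 := by push_cast; ring
        rw [this, ← heq, ← hr.2.2]
        exact hr.2.1

/-- In the full cycle, every player is a successor of every player. -/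
lemma aux_succ_univ (i j : Fin n) : isSuccessorIn n Set.univ i j := by
  have key : ∀ m : ℕ, isSuccessorIn n Set.univ i (i + ((m+1 : ℕ) : Fin n)) := by
    intro m
    induction m with
    | zero => exact Relation.TransGen.single ⟨trivial, trivial, by simp [cycleEdge]⟩
    | succ m ih =>
        refine Relation.TransGen.tail ih ⟨trivial, trivial, ?_⟩
        show i + ((m+1+1 : ℕ) : Fin n) = i + ((m+1 : ℕ) : Fin n) + 1
        push_cast; ring
  have := key (j - i - 1).val
  have h2 : i + (((j - i - 1).val + 1 : ℕ) : Fin n) = j := by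
    push_cast [Fin.cast_val_eq_self]; ring
  rwa [h2] at this

/-- Necessity criterion for consistency: any player not placed last must be
placed before its cycle-predecessor. -/
lemma aux_crit (hn : 2 ≤ n) {π : Equiv.Perm (Fin n)} (hc : consistent n π) (x : Fin n)
    (hx : (π x).val ≠ n - 1) : π x < π (x - 1) := by
  by_contra h
  have hne : x - 1 ≠ x := by
    intro he
    have h10 : (1 : Fin n) = 0 := by
      have := sub_eq_self.mp he
      simpa using this
    have := congrArg Fin.val h10
    rw [Fin.val_one', Nat.mod_eq_of_lt (by omega)] at this
    simp at this
  have hle : π (x - 1) ≤ π x := le_of_not_gt h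
  have hmem : x - 1 ∈ Pbar π x := hle
  apply hc x (x - 1) hmem
  constructor
  · exact Relation.TransGen.single ⟨hmem, le_refl (π x), by simp [cycleEdge]⟩
  · intro hs
    obtain ⟨m, hm1, heq, hmemS⟩ := aux_succ_path hs
    have hdvd : n ∣ m + 1 := by
      have hxx : x + (((m:ℕ) : Fin n) + 1) = x := by rw [← add_assoc, ← heq]; ring
      have h1 : ((m : ℕ) : Fin n) + 1 = 0 := add_eq_left.mp hxx
      have h2 : ((m + 1 : ℕ) : Fin n) = 0 := by push_cast; exact h1
      exact (Fin.natCast_eq_zero).mp h2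
    have hmn : n - 1 ≤ m := by
      have := Nat.le_of_dvd (by omega) hdvd
      omega
    have hall : ∀ y : Fin n, y ∈ Pbar π x := by
      intro y
      have := hmemS (y - x).val (le_trans (by omega) hmn)
      rwa [Fin.cast_val_eq_self, show x + (y - x) = y from by ring] at this
    have := hall (π.symm ⟨n - 1, by omega⟩)
    have h3 : (⟨n - 1, by omega⟩ : Fin n) ≤ π x := by simpa [Pbar] using this
    have h4 : (π x).val ≤ n - 1 := by omega
    have := Fin.le_def.mp h3
    simp at this
    omega

/-- The permutations consistent with the directed cycle are exactly the maps
`x ↦ c - x` for `c : Fin n`. -/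
lemma aux_consistent_iff (hn : 2 ≤ n) (π : Equiv.Perm (Fin n)) :
    consistent n π ↔ ∃ c : Fin n, π = Equiv.subLeft c := by
  constructor
  · intro hc
    set l := π.symm ⟨n - 1, by omega⟩ with hl
    have hπl : π l = ⟨n - 1, by omega⟩ := π.apply_symm_apply _
    have step : ∀ k : ℕ, k + 1 < n →
        (π (l + ((k+1 : ℕ) : Fin n))).val < (π (l + ((k : ℕ) : Fin n))).val := by
      intro k hk
      have hne : (π (l + ((k+1 : ℕ) : Fin n))).val ≠ n - 1 := by
        intro he
        have : π (l + ((k+1 : ℕ) : Fin n)) = π l := by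
          rw [hπl]; exact Fin.ext he
        have h2 := π.injective this
        have h3 : ((k+1 : ℕ) : Fin n) = 0 := add_eq_left.mp h2
        have h4 := (Fin.natCast_eq_zero).mp h3
        have := Nat.le_of_dvd (by omega) h4
        omega
      have := aux_crit hn hc (l + ((k+1 : ℕ) : Fin n)) hne
      have harg : l + ((k+1 : ℕ) : Fin n) - 1 = l + ((k : ℕ) : Fin n) := by
        push_cast; ring
      rw [harg] at this
      exact this
    have upper : ∀ k : ℕ, k < n → (π (l + ((k : ℕ) : Fin n))).val ≤ n - 1 - k := by
      intro k
      induction k with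
      | zero => intro _; simp [hπl]
      | succ k ih =>
        intro hk
        have h1 := step k hk
        have h2 := ih (by omega)
        omega
    have lower : ∀ d : ℕ, d < n → d ≤ (π (l + ((n - 1 - d : ℕ) : Fin n))).val := by
      intro d
      induction d with
      | zero => intro _; omega
      | succ d ih =>
        intro hd
        have h2 := ih (by omega)
        have h1 := step (n - 1 - (d+1)) (by omega)
        rw [show n - 1 - (d+1) + 1 = n - 1 - d from by omega] at h1
        omega
    have key : ∀ k : ℕ, k < n → π (l + ((k : ℕ) : Fin n)) = ((n - 1 - k : ℕ) : Fin n) := by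
      intro k hk
      have h1 := upper k hk
      have h2 := lower (n - 1 - k) (by omega)
      rw [show n - 1 - (n - 1 - k) = k from by omega] at h2
      have : (π (l + ((k : ℕ) : Fin n))).val = n - 1 - k := by omega
      rw [← this, Fin.cast_val_eq_self]
    refine ⟨l - 1, ?_⟩
    refine Equiv.ext fun x => ?_
    have hk : (x - l).val < n := Fin.is_lt _
    have hx : x = l + (((x - l).val : ℕ) : Fin n) := by
      rw [Fin.cast_val_eq_self]; ring
    set k := (x - l).val with hkdef
    rw [Equiv.subLeft_apply]
    conv_lhs => rw [hx]
    rw [key k hk]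
    have h0 : ((k + 1 + (n - 1 - k) : ℕ) : Fin n) = 0 := by
      rw [show k + 1 + (n - 1 - k) = n from by omega]; exact Fin.natCast_self n
    push_cast at h0
    conv_rhs => rw [hx]
    linear_combination h0
  · rintro ⟨c, rfl⟩
    intro i j hj hdom
    set S := Pbar (Equiv.subLeft c) i with hS
    rcases eq_or_ne ((c - i).val) (n - 1) with h1 | h1
    · have hu : S = Set.univ := by
        ext y
        simp only [hS, Pbar, Set.mem_setOf_eq, Set.mem_univ, iff_true]
        rw [Fin.le_def]
        simp only [Equiv.subLeft_apply]
        rw [h1]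
        omega
      exact hdom.2 (hu ▸ aux_succ_univ i j)
    · obtain ⟨b, _, hb⟩ := (Relation.TransGen.tail'_iff).mp hdom.1
      have hbv : b = i - 1 := by
        have := hb.2.2
        simp only [cycleEdge] at this
        rw [this]; ring
      have hbS : b ∈ S := hb.1
      rw [hbv] at hbS
      have : (c - (i - 1)).val ≤ (c - i).val := Fin.le_def.mp hbS
      have he : c - (i - 1) = (c - i) + 1 := by ring
      have hval : ((c - i) + 1).val = (c - i).val + 1 := by
        rw [Fin.add_def]
        have h2 : (1 : Fin n).val = 1 := by
          rw [Fin.val_one']; exact Nat.mod_eq_of_lt (by omega)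
        rw [h2]
        exact Nat.mod_eq_of_lt (by have := Fin.is_lt (c - i); omega)
      rw [he, hval] at this
      omega

omit [NeZero n] in
lemma aux_ncard_Pbar (π : Equiv.Perm (Fin n)) (i : Fin n) :
    (Pbar π i).ncard = (π i).val + 1 := by
  have h : Pbar π i = ⇑π ⁻¹' (Set.Iic (π i)) := rfl
  rw [h, ← Equiv.image_symm_eq_preimage, Set.ncard_image_of_injective _ π.symm.injective,
    ← Finset.coe_Iic, Set.ncard_coe_finset, Fin.card_Iic]

omit [NeZero n] in
lemma aux_ncard_Pset (π : Equiv.Perm (Fin n)) (i : Fin n) :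
    (Pset π i).ncard = (π i).val := by
  have h : Pset π i = ⇑π ⁻¹' (Set.Iio (π i)) := rfl
  rw [h, ← Equiv.image_symm_eq_preimage, Set.ncard_image_of_injective _ π.symm.injective,
    ← Finset.coe_Iio, Set.ncard_coe_finset, Fin.card_Iio]

lemma aux_subLeft_inj : Function.Injective (fun c : Fin n => Equiv.subLeft c) := by
  intro a b h
  have := congrArg (fun e : Equiv.Perm (Fin n) => e 0) h
  simpa using this

end Aux

/-- For the symmetric game `v_f(S) = f(|S|)` on the directed `n`-cycle, the sum
over all consistent permutations of the marginal contribution of a fixed player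
`i` equals `Σ_{j=1}^n (f(j) - f(j-1))`, which telescopes to `f(n) - f(0)`. -/
theorem cycle_sum_marginal_contributions (n : ℕ) [NeZero n] (hn : 2 ≤ n)
    (f : ℕ → ℝ) (i : Fin n) :
    (∑ π ∈ (Set.toFinite {π : Equiv.Perm (Fin n) | consistent n π}).toFinset,
        (f (Pbar π i).ncard - f (Pset π i).ncard))
      = ∑ j ∈ Finset.Icc 1 n, (f j - f (j - 1)) ∧
    (∑ π ∈ (Set.toFinite {π : Equiv.Perm (Fin n) | consistent n π}).toFinset,
        (f (Pbar π i).ncard - f (Pset π i).ncard))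
      = f n - f 0 := by
  have hIcc : Finset.Icc 1 n = Finset.image (· + 1) (Finset.range n) := by
    ext j
    simp only [Finset.mem_Icc, Finset.mem_image, Finset.mem_range]
    constructor
    · rintro ⟨ha, hb⟩; exact ⟨j - 1, by omega, by omega⟩
    · rintro ⟨a, ha, rfl⟩; omega
  have hfin : (Set.toFinite {π : Equiv.Perm (Fin n) | consistent n π}).toFinset
      = Finset.image (fun c : Fin n => Equiv.subLeft c) Finset.univ := by
    ext π
    simp only [Set.Finite.mem_toFinset, Set.mem_setOf_eq, Finset.mem_image,
      Finset.mem_univ, true_and]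
    rw [aux_consistent_iff hn]
    exact exists_congr fun c => eq_comm
  have hsum : (∑ π ∈ (Set.toFinite {π : Equiv.Perm (Fin n) | consistent n π}).toFinset,
        (f (Pbar π i).ncard - f (Pset π i).ncard))
      = ∑ j ∈ Finset.Icc 1 n, (f j - f (j - 1)) := by
    rw [hfin, Finset.sum_image (fun a _ b _ h => aux_subLeft_inj h)]
    simp only [aux_ncard_Pbar, aux_ncard_Pset]
    have h1 : (∑ c : Fin n, (f ((Equiv.subLeft c i).val + 1) - f ((Equiv.subLeft c i).val)))
        = ∑ y : Fin n, (f (y.val + 1) - f y.val) := by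
      refine (Fintype.sum_equiv (Equiv.addRight i) _ _ fun y => ?_).symm
      simp [Equiv.subLeft_apply]
    rw [h1, Fin.sum_univ_eq_sum_range (fun t => f (t + 1) - f t)]
    rw [hIcc, Finset.sum_image (by intro a _ b _ h; simp only at h; omega)]
    simp
  refine ⟨hsum, ?_⟩
  rw [hsum, hIcc, Finset.sum_image (by intro a _ b _ h; simp only at h; omega)]
  simp only [Nat.add_sub_cancel]
  exact Finset.sum_range_sub f n
end

section
/- Let N = {1, ..., n} with n ≥ 2, let Γ be the directed cycle on N with edge set {(i, i+1) : i = 1, ..., n-1} ∪ {(n, 1)}, let f : ℤ_{≥0} → ℝ with f(0) = 0, and define the TU-game v_f : 2^N → ℝ by v_f(S) = f(|S|). Then the Shapley value of the digraph game (v_f, Γ) assigns to every player i ∈ N the amount f(n)/n, i.e., Sh(v_f, Γ) = (f(n)/n, f(n)/n, ..., f(n)/n). -/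
/- ### Auxiliary lemmas -/

open scoped Fin.NatCast Fin.CommRing

lemma val_neg_one' (n : ℕ) [NeZero n] : ((-1 : Fin n) : ℕ) = n - 1 := by
  have h1 : (0 : ℕ) < n := Nat.pos_of_ne_zero (NeZero.ne n)
  have : (-1 : Fin n) = ((n - 1 : ℕ) : Fin n) := by
    have : ((n - 1 : ℕ) : Fin n) + 1 = 0 := by
      have : ((n - 1 : ℕ) : Fin n) + 1 = ((n - 1 + 1 : ℕ) : Fin n) := by push_cast; ring
      rw [this, Nat.sub_add_cancel h1, Fin.natCast_self]
    exact (eq_neg_of_add_eq_zero_left this).symm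
  rw [this, Fin.val_natCast, Nat.mod_eq_of_lt (by omega)]

lemma le_neg_one' (n : ℕ) [NeZero n] (y : Fin n) : y ≤ (-1 : Fin n) := by
  rw [Fin.le_def, val_neg_one']
  omega

lemma eq_neg_one_of_val (n : ℕ) [NeZero n] {x : Fin n} (h : (x : ℕ) = n - 1) :
    x = -1 := by
  apply Fin.ext
  rw [val_neg_one', h]

lemma val_add_one_lt (n : ℕ) [NeZero n] (hn : 2 ≤ n) {x : Fin n} (hx : (x : ℕ) + 1 < n) :
    ((x + 1 : Fin n) : ℕ) = (x : ℕ) + 1 := by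
  rw [Fin.val_add, Fin.val_one', Nat.mod_eq_of_lt (show 1 < n by omega),
    Nat.mod_eq_of_lt (show (x : ℕ) + 1 < n from hx)]

/-- If the predecessor of `j` is not in `S`, nobody reaches `j` in `Γ|_S`. -/
lemma noPred {n : ℕ} [NeZero n] {S : Set (Fin n)} {j : Fin n} (h : j - 1 ∉ S) (i : Fin n) :
    ¬ isSuccessorIn n S i j := by
  intro hij
  obtain ⟨b, _, hb⟩ := Relation.TransGen.tail'_iff.mp hij
  apply h
  have hb22 := hb.2.2
  unfold cycleEdge at hb22
  have : b = j - 1 := by rw [hb22]; ring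
  rw [← this]
  exact hb.1

/-- Structure of paths in the cycle restricted to `S`. -/
lemma path_struct {n : ℕ} [NeZero n] {S : Set (Fin n)} {i j : Fin n}
    (h : isSuccessorIn n S i j) :
    ∃ t : ℕ, 1 ≤ t ∧ j = i + (t : Fin n) ∧ ∀ s ≤ t, i + (s : Fin n) ∈ S := by
  induction h with
  | @single b hb =>
      refine ⟨1, le_refl 1, ?_, ?_⟩
      · have hb22 := hb.2.2; unfold cycleEdge at hb22; rw [hb22]; push_cast; ring
      · intro s hs
        interval_cases s
        · simpa using hb.1
        · have hb22 := hb.2.2; unfold cycleEdge at hb22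
          have h1 : i + ((1 : ℕ) : Fin n) = b := by rw [hb22]; push_cast; ring
          rw [h1]; exact hb.2.1
  | @tail b c _ hb ih =>
      obtain ⟨t, ht1, htj, hts⟩ := ih
      refine ⟨t + 1, by omega, ?_, ?_⟩
      · have hb22 := hb.2.2; unfold cycleEdge at hb22
        rw [hb22, htj]; push_cast; ring
      · intro s hs
        rcases Nat.lt_or_ge s (t + 1) with h' | h'
        · exact hts s (by omega)
        · have hst : s = t + 1 := by omega
          subst hst
          have hb22 := hb.2.2; unfold cycleEdge at hb22
          have h1 : i + ((t + 1 : ℕ) : Fin n) = c := by rw [hb22, htj]; push_cast; ring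
          rw [h1]; exact hb.2.1

/-- Everybody reaches everybody in the full cycle. -/
lemma reach_univ (n : ℕ) [NeZero n] (i j : Fin n) :
    isSuccessorIn n Set.univ i j := by
  have key : ∀ k : ℕ, 1 ≤ k →
      isSuccessorIn n Set.univ i (i + (k : Fin n)) := by
    intro k hk
    induction k with
    | zero => omega
    | succ m ih =>
        rcases Nat.eq_zero_or_pos m with h0 | hpos
        · subst h0
          exact Relation.TransGen.single ⟨trivial, trivial, by unfold cycleEdge; push_cast; ring⟩
        · exact (ih hpos).tail ⟨trivial, trivial, by unfold cycleEdge; push_cast; ring⟩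
  by_cases hij : j = i
  · subst hij
    have := key n (Nat.one_le_iff_ne_zero.mpr (NeZero.ne n))
    simpa using this
  · have hpos : 1 ≤ ((j - i : Fin n) : ℕ) := by
      rcases Nat.eq_zero_or_pos ((j - i : Fin n) : ℕ) with h0 | h
      · exfalso
        apply hij
        have : j - i = 0 := Fin.ext (by simpa using h0)
        have := sub_eq_zero.mp this
        exact this
      · exact h
    have := key ((j - i : Fin n) : ℕ) hpos
    rw [Fin.cast_val_eq_self] at this
    simpa using this

/-- If `i` reaches its own predecessor within `S`, then `S` is everything. -/
lemma reach_pred_univ {n : ℕ} [NeZero n] {S : Set (Fin n)} {i : Fin n}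
    (h : isSuccessorIn n S i (i - 1)) : S = Set.univ := by
  obtain ⟨t, ht1, htj, hts⟩ := path_struct h
  have hcast : ((t : Fin n)) = -1 := by
    have : i + (-1 : Fin n) = i + (t : Fin n) := by
      rw [← htj]; ring
    exact (add_left_cancel this).symm
  have hdvd : n ∣ t + 1 := by
    have h0 : ((t + 1 : ℕ) : Fin n) = 0 := by push_cast; rw [hcast]; ring
    exact (CharP.cast_eq_zero_iff (Fin n) n (t + 1)).mp h0
  have htn : n - 1 ≤ t := by
    have h1 : n ≤ t + 1 := Nat.le_of_dvd (by omega) hdvd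
    omega
  ext x
  simp only [Set.mem_univ, iff_true]
  have hx : x = i + (((x - i : Fin n) : ℕ) : Fin n) := by
    rw [Fin.cast_val_eq_self]; ring
  rw [hx]
  exact hts _ (le_trans (by have := (x - i).isLt; omega) htn)

/-- Every "rotation+reflection" `k ↦ a - k` is consistent with the cycle. -/
lemma consistent_subLeft (n : ℕ) [NeZero n] (hn : 2 ≤ n) (a : Fin n) :
    consistent n (Equiv.subLeft a) := by
  intro i j hj hdom
  by_cases hi : a - i = -1
  · -- `P̄` is everything, so no domination is possible.
    have huniv : Pbar (Equiv.subLeft a) i = Set.univ := by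
      ext x
      simp only [Pbar, Set.mem_setOf_eq, Set.mem_univ, iff_true, Equiv.subLeft_apply]
      rw [hi]
      exact le_neg_one' n _
    rw [huniv] at hdom
    exact hdom.2 (reach_univ n i j)
  · -- the predecessor of `i` is not in `P̄`, so `i` cannot be reached at all.
    have hlt : ((a - i : Fin n) : ℕ) + 1 < n := by
      have h1 : ((a - i : Fin n) : ℕ) < n := (a - i).isLt
      rcases Nat.lt_or_ge (((a - i : Fin n) : ℕ) + 1) n with h | h
      · exact h
      · exfalso; exact hi (eq_neg_one_of_val n (by omega))
    have hnot : i - 1 ∉ Pbar (Equiv.subLeft a) i := by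
      simp only [Pbar, Set.mem_setOf_eq, Equiv.subLeft_apply]
      have heq : a - (i - 1) = (a - i) + 1 := by ring
      rw [heq, Fin.le_def, val_add_one_lt n hn hlt]
      omega
    exact noPred hnot j hdom.1

/-- Conversely, every consistent permutation is of the form `k ↦ a - k`. -/
lemma consistent_eq_subLeft (n : ℕ) [NeZero n] (hn : 2 ≤ n) {π : Equiv.Perm (Fin n)}
    (hc : consistent n π) : π = Equiv.subLeft (π.symm 0) := by
  -- Step 1: unless `i` comes last, its predecessor comes later than `i`.
  have hC : ∀ i : Fin n, π i ≠ -1 → π i < π (i - 1) := by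
    intro i hi
    by_contra hle
    push_neg at hle
    have hmem : i - 1 ∈ Pbar π i := hle
    have hd : dominatesIn n (Pbar π i) (i - 1) i := by
      constructor
      · exact Relation.TransGen.single ⟨hmem, le_refl (π i), by unfold cycleEdge; ring⟩
      · intro hsucc
        have huniv := reach_pred_univ hsucc
        have hm : π.symm (-1) ∈ Pbar π i := by rw [huniv]; exact Set.mem_univ _
        have h2 : (-1 : Fin n) ≤ π i := by
          simpa [Pbar] using hm
        exact hi (le_antisymm (le_neg_one' n _) h2)
    exact hc i (i - 1) hmem hd
  set a := π.symm 0 with ha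
  have ha0 : π a = 0 := π.apply_symm_apply 0
  -- Step 2: the player `a + 1` comes last.
  have htop : π (a + 1) = -1 := by
    by_contra h
    have := hC (a + 1) h
    rw [add_sub_cancel_right, ha0] at this
    exact absurd this (by simp)
  -- Step 3: the position of `a - m` is at least `m`.
  have hGmono : ∀ m : ℕ, ∀ h : m < n, (m : ℕ) ≤ ((π (a - ⟨m, h⟩) : Fin n) : ℕ) := by
    intro m
    induction m with
    | zero => intro h; exact Nat.zero_le _
    | succ m ih =>
        intro h
        have hm : m < n := by omega
        have IH := ih hm
        have hne : π (a - ⟨m, hm⟩) ≠ -1 := by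
          intro he
          have heq : a - ⟨m, hm⟩ = a + 1 := π.injective (he.trans htop.symm)
          have hx : (⟨m, hm⟩ : Fin n) = -1 := by
            have : (⟨m, hm⟩ : Fin n) = a - (a + 1) := by rw [← heq]; ring
            rw [this]; ring
          have := congrArg Fin.val hx
          rw [val_neg_one'] at this
          simp only at this
          omega
        have hC' := hC (a - ⟨m, hm⟩) hne
        have hstep : a - ⟨m, hm⟩ - 1 = a - ⟨m + 1, h⟩ := by
          have : (⟨m + 1, h⟩ : Fin n) = (⟨m, hm⟩ : Fin n) + 1 := by
            apply Fin.ext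
            rw [val_add_one_lt n (by omega) (by simpa using h)]
          rw [this]; ring
        rw [hstep, Fin.lt_def] at hC'
        omega
  -- Step 4: equality by a counting (sum) argument.
  have hG : ∀ k : Fin n, π (a - k) = k := by
    set G : Fin n ≃ Fin n := (Equiv.subLeft a).trans π with hGdef
    have hsum : ∑ k : Fin n, (G k).val = ∑ k : Fin n, k.val :=
      Equiv.sum_comp G Fin.val
    have hle : ∀ k ∈ Finset.univ, k.val ≤ (G k).val := by
      intro k _
      have := hGmono k.val k.isLt
      simpa [hGdef, Equiv.subLeft] using this
    have hkey := (Finset.sum_eq_sum_iff_of_le hle).mp hsum.symm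
    intro k
    have hk := (hkey k (Finset.mem_univ k)).symm
    have hGk : G k = k := Fin.ext hk
    simpa [hGdef, Equiv.subLeft] using hGk
  apply Equiv.ext
  intro j
  have h1 : π (a - (a - j)) = a - j := hG (a - j)
  rw [sub_sub_cancel] at h1
  simpa [Equiv.subLeft] using h1

/-- The consistent permutations are exactly the maps `k ↦ a - k`. -/
lemma consistent_set (n : ℕ) [NeZero n] (hn : 2 ≤ n) :
    {π : Equiv.Perm (Fin n) | consistent n π}
      = Set.range (fun a : Fin n => Equiv.subLeft a) := by
  ext π
  constructor
  · intro h
    exact ⟨π.symm 0, (consistent_eq_subLeft n hn h).symm⟩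
  · rintro ⟨a, rfl⟩
    exact consistent_subLeft n hn a

lemma ncard_Pbar {n : ℕ} [NeZero n] (π : Equiv.Perm (Fin n)) (i : Fin n) :
    (Pbar π i).ncard = (π i : ℕ) + 1 := by
  have h : Pbar π i = ⇑π.symm '' Set.Iic (π i) := by
    ext j
    simp only [Pbar, Set.mem_setOf_eq, Set.mem_image, Set.mem_Iic]
    constructor
    · intro hj; exact ⟨π j, hj, π.symm_apply_apply j⟩
    · rintro ⟨x, hx, rfl⟩; simpa using hx
  rw [h, Set.ncard_image_of_injective _ π.symm.injective, ← Finset.coe_Iic,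
    Set.ncard_coe_finset, Fin.card_Iic]

lemma ncard_Pset {n : ℕ} [NeZero n] (π : Equiv.Perm (Fin n)) (i : Fin n) :
    (Pset π i).ncard = (π i : ℕ) := by
  have h : Pset π i = ⇑π.symm '' Set.Iio (π i) := by
    ext j
    simp only [Pset, Set.mem_setOf_eq, Set.mem_image, Set.mem_Iio]
    constructor
    · intro hj; exact ⟨π j, hj, π.symm_apply_apply j⟩
    · rintro ⟨x, hx, rfl⟩; simpa using hx
  rw [h, Set.ncard_image_of_injective _ π.symm.injective, ← Finset.coe_Iio,
    Set.ncard_coe_finset, Fin.card_Iio]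

/-- The Shapley value of the digraph game `(v_f, Γ)`, where `Γ` is the directed
`n`-cycle and `v_f(S) = f(|S|)` with `f(0) = 0`, assigns to every player `i`
the amount `f(n) / n`. -/
theorem cycle_shapley_value (n : ℕ) [NeZero n] (hn : 2 ≤ n)
    (f : ℕ → ℝ) (hf : f 0 = 0) (i : Fin n) :
    (1 / (Set.ncard {π : Equiv.Perm (Fin n) | consistent n π} : ℝ)) *
        ∑ π ∈ (Set.toFinite {π : Equiv.Perm (Fin n) | consistent n π}).toFinset,
          (f (Pbar π i).ncard - f (Pset π i).ncard)
      = f n / n := by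
  have hset := consistent_set n hn
  have hinj : Function.Injective (fun a : Fin n => Equiv.subLeft a) := by
    intro x y h
    have := congrFun (congrArg (fun e : Equiv.Perm (Fin n) => ⇑e) h) 0
    simpa [Equiv.subLeft] using this
  -- the number of consistent permutations is `n`
  have hcard : ({π : Equiv.Perm (Fin n) | consistent n π}).ncard = n := by
    rw [hset]
    have : Set.range (fun a : Fin n => Equiv.subLeft a)
        = ↑(Finset.univ.image (fun a : Fin n => Equiv.subLeft a)) := by
      rw [Finset.coe_image, Finset.coe_univ, Set.image_univ]
    rw [this, Set.ncard_coe_finset, Finset.card_image_of_injective _ hinj,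
      Finset.card_univ, Fintype.card_fin]
  -- rewrite the summation set
  have hfin : (Set.toFinite {π : Equiv.Perm (Fin n) | consistent n π}).toFinset
      = Finset.univ.image (fun a : Fin n => Equiv.subLeft a) := by
    apply Finset.ext
    intro π
    simp only [Set.Finite.mem_toFinset, Finset.mem_image, Finset.mem_univ, true_and]
    rw [show (π ∈ {π : Equiv.Perm (Fin n) | consistent n π}) = (π ∈ Set.range
      (fun a : Fin n => Equiv.subLeft a)) from by rw [hset]]
    simp [Set.mem_range]
  rw [hfin, Finset.sum_image (fun x _ y _ h => hinj h)]
  have hterm : ∀ a : Fin n,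
      f (Pbar (Equiv.subLeft a) i).ncard - f (Pset (Equiv.subLeft a) i).ncard
        = f (((a - i : Fin n) : ℕ) + 1) - f ((a - i : Fin n) : ℕ) := by
    intro a
    rw [ncard_Pbar, ncard_Pset]
    simp [Equiv.subLeft]
  rw [Finset.sum_congr rfl (fun a _ => hterm a)]
  have hre : ∑ a : Fin n, (f (((a - i : Fin n) : ℕ) + 1) - f ((a - i : Fin n) : ℕ))
      = ∑ b : Fin n, (f ((b : ℕ) + 1) - f (b : ℕ)) :=
    Equiv.sum_comp (Equiv.subRight i) (fun b : Fin n => f ((b : ℕ) + 1) - f (b : ℕ))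
  rw [hre, Fin.sum_univ_eq_sum_range (fun k => f (k + 1) - f k) n,
    Finset.sum_range_sub f, hf, sub_zero, hcard]
  rw [one_div_mul_eq_div]
end

section
/- Let N = {1, ..., n} with n ≥ 2, let Γ be the directed cycle on N with edge set {(i, i+1) : i = 1, ..., n-1} ∪ {(n, 1)}, and for k ∈ ℕ define the TU-game v_k : 2^N → ℝ by v_k(S) = |S|^k (with v_k(∅) = 0; for k = 0 set v_0(S) = 1 for S ≠ ∅). Then the Shapley value of the digraph game (v_k, Γ) assigns to every player i ∈ N the amount n^{k-1}; in particular Sh(v_0, Γ)_i = 1/n and Sh(v_1, Γ)_i = 1 for every i. -/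
open Fin.NatCast Fin.CommRing

section aux
variable {n : ℕ} [NeZero n]

lemma fin_sub_val_of_le {a b : Fin n} (h : b ≤ a) : (a - b).val = a.val - b.val := by
  have hb : b.val ≤ a.val := h
  have ha : a.val < n := a.isLt
  have hb' : b.val < n := b.isLt
  rw [Fin.sub_def]
  show (n - b.val + a.val) % n = a.val - b.val
  rw [show n - b.val + a.val = (a.val - b.val) + n by omega, Nat.add_mod_right]
  exact Nat.mod_eq_of_lt (by omega)

lemma reach_exists {S : Set (Fin n)} {i j : Fin n} (h : isSuccessorIn n S i j) :
    ∃ m : ℕ, 1 ≤ m ∧ j = i + (m : Fin n) ∧ ∀ t ≤ m, i + (t : Fin n) ∈ S := by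
  induction h with
  | single h =>
    refine ⟨1, le_refl 1, by simpa [cycleEdge] using h.2.2, ?_⟩
    intro t ht
    interval_cases t
    · simpa using h.1
    · simpa using h.2.2 ▸ h.2.1
  | tail hab hbc ih =>
    obtain ⟨m, hm, hb, hmem⟩ := ih
    refine ⟨m + 1, by omega, ?_, ?_⟩
    · rw [hbc.2.2, hb]; push_cast; ring
    · intro t ht
      rcases Nat.lt_or_ge t (m + 1) with h1 | h1
      · exact hmem t (by omega)
      · have ht1 : t = m + 1 := by omega
        subst ht1
        have : i + ((m + 1 : ℕ) : Fin n) = i + (m : Fin n) + 1 := by push_cast; ring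
        rw [this, ← hb, ← hbc.2.2]
        exact hbc.2.1

lemma exists_reach {S : Set (Fin n)} {i : Fin n} :
    ∀ m : ℕ, 1 ≤ m → (∀ t ≤ m, i + (t : Fin n) ∈ S) → isSuccessorIn n S i (i + (m : Fin n))
  | 0, h, _ => absurd h (by omega)
  | 1, _, hmem => Relation.TransGen.single
      ⟨by simpa using hmem 0 (by omega), hmem 1 le_rfl, by show i + ((1:ℕ) : Fin n) = i + 1; push_cast; ring⟩
  | (m+2), _, hmem => by
      have ih := exists_reach (m+1) (by omega) (fun t ht => hmem t (by omega))
      refine ih.tail ⟨hmem (m+1) (by omega), hmem (m+2) le_rfl, ?_⟩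
      show i + ((m+2 : ℕ) : Fin n) = i + ((m+1 : ℕ) : Fin n) + 1
      push_cast; ring

end aux

section aux2
variable {n : ℕ} [NeZero n]

lemma mem_Pbar_subLeft_exists {c i j : Fin n} (hj : j ∈ Pbar (Equiv.subLeft c) i) :
    ∃ t ≤ (c - i).val, j = i + (t : Fin n) := by
  have h : c - j ≤ c - i := by simpa [Pbar] using hj
  have h' : (c - j).val ≤ (c - i).val := h
  refine ⟨(j - i).val, ?_, by rw [Fin.cast_val_eq_self]; ring⟩
  have hji : j - i = (c - i) - (c - j) := by ring
  rw [hji, fin_sub_val_of_le h]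
  omega

lemma mem_Pbar_subLeft_of_le {c i : Fin n} {t : ℕ} (ht : t ≤ (c - i).val) :
    i + (t : Fin n) ∈ Pbar (Equiv.subLeft c) i := by
  have h1 : c - (i + (t : Fin n)) = (c - i) - (t : Fin n) := by ring
  have h2 : ((t : Fin n)) ≤ c - i := by
    rw [Fin.le_def, Fin.val_natCast]
    exact le_trans (Nat.mod_le t n) ht
  show Equiv.subLeft c _ ≤ Equiv.subLeft c i
  simp only [Equiv.subLeft_apply, h1, Fin.le_def, fin_sub_val_of_le h2]
  omega

lemma subLeft_consistent (c : Fin n) : consistent n (Equiv.subLeft c) := by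
  intro i j hj hdom
  obtain ⟨s, hs, hjs⟩ := mem_Pbar_subLeft_exists hj
  rcases Nat.eq_zero_or_pos s with h0 | hpos
  · subst h0
    simp only [Nat.cast_zero, add_zero] at hjs
    rw [hjs] at hdom
    exact hdom.2 hdom.1
  · apply hdom.2
    rw [hjs]
    exact exists_reach s hpos (fun t ht => mem_Pbar_subLeft_of_le (by omega))

lemma key_forward {π : Equiv.Perm (Fin n)} (hc : consistent n π) (hn : 2 ≤ n) {i : Fin n}
    (hlt : (π i).val < n - 1) : π i < π (i - 1) := by
  by_contra h
  push_neg at h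
  have hmem : i - 1 ∈ Pbar π i := h
  refine hc i (i - 1) hmem ⟨?_, ?_⟩
  · exact Relation.TransGen.single ⟨hmem, le_refl (π i), by show i = i - 1 + 1; ring⟩
  · intro hreach
    obtain ⟨m, hm1, heq, hmemS⟩ := reach_exists hreach
    have hcast : ((m + 1 : ℕ) : Fin n) = 0 := by
      have h1 : i + ((m + 1 : ℕ) : Fin n) = i + 0 := by
        push_cast
        rw [← add_assoc, ← heq]
        ring
      exact add_left_cancel h1
    have hdvd : n ∣ m + 1 := by
      have := congrArg Fin.val hcast
      rw [Fin.val_natCast] at this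
      exact Nat.dvd_of_mod_eq_zero this
    have hmn : n - 1 ≤ m := by
      have := Nat.le_of_dvd (by omega) hdvd
      omega
    have hall : ∀ x : Fin n, x ∈ Pbar π i := by
      intro x
      have := hmemS (x - i).val (le_trans (by omega) hmn)
      rwa [Fin.cast_val_eq_self, show i + (x - i) = x by ring] at this
    have htop := hall (π.symm ⟨n - 1, by omega⟩)
    have : (⟨n - 1, by omega⟩ : Fin n) ≤ π i := by
      simpa [Pbar] using htop
    have : n - 1 ≤ (π i).val := this
    omega

end aux2

section aux3
variable {n : ℕ} [NeZero n]

lemma consistent_eq {π : Equiv.Perm (Fin n)} (hc : consistent n π) (hn : 2 ≤ n) :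
    π = Equiv.subLeft (π.symm 0) := by
  set i0 := π.symm 0 with hi0
  have hpi0 : π i0 = 0 := Equiv.apply_symm_apply π 0
  have hneg1 : ((n - 1 : ℕ) : Fin n) = -1 := by
    have : ((n - 1 : ℕ) : Fin n) + 1 = 0 := by
      have : (((n - 1) + 1 : ℕ) : Fin n) = 0 := by
        rw [show (n - 1) + 1 = n by omega, Fin.natCast_self]
      push_cast at this
      exact this
    linear_combination this
  have hlast : i0 - ((n - 1 : ℕ) : Fin n) = i0 + 1 := by rw [hneg1]; ring
  have htop : (π (i0 + 1)).val = n - 1 := by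
    by_contra h
    have hlt : (π (i0 + 1)).val < n - 1 := by have := (π (i0 + 1)).isLt; omega
    have h2 := key_forward hc hn hlt
    rw [show i0 + 1 - 1 = i0 by ring, hpi0] at h2
    exact absurd h2 (by simp [Fin.lt_def])
  set f : ℕ → ℕ := fun t => (π (i0 - (t : Fin n))).val with hf
  have hf0 : f 0 = 0 := by simp [hf, hpi0]
  have hflast : f (n - 1) = n - 1 := by rw [hf]; simp only [hlast]; exact htop
  have hstep : ∀ t, t < n - 1 → f t < f (t + 1) := by
    intro t ht
    have hne : i0 - (t : Fin n) ≠ i0 + 1 := by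
      intro h
      have h1 : (t : Fin n) = ((n - 1 : ℕ) : Fin n) := by
        rw [hneg1]; linear_combination -h
      have := congrArg Fin.val h1
      rw [Fin.val_natCast, Fin.val_natCast, Nat.mod_eq_of_lt (by omega),
        Nat.mod_eq_of_lt (by omega)] at this
      omega
    have hlt : (π (i0 - (t : Fin n))).val < n - 1 := by
      have hne' : (π (i0 - (t : Fin n))).val ≠ n - 1 := by
        intro h
        exact hne (π.injective (Fin.ext (by rw [h, htop])))
      have := (π (i0 - (t : Fin n))).isLt
      omega
    have h2 := key_forward hc hn hlt
    have harg : (i0 - (t : Fin n)) - 1 = i0 - ((t + 1 : ℕ) : Fin n) := by push_cast; ring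
    rw [harg] at h2
    exact h2
  have hadd : ∀ t d, t + d ≤ n - 1 → f t + d ≤ f (t + d) := by
    intro t d
    induction d with
    | zero => simp
    | succ d ih =>
      intro h
      have h1 := ih (by omega)
      have h2 := hstep (t + d) (by omega)
      have h3 : f (t + (d + 1)) = f ((t + d) + 1) := rfl
      omega
  have hval : ∀ t, t ≤ n - 1 → f t = t := by
    intro t ht
    have h1 : t ≤ f t := by
      have := hadd 0 t (by omega)
      simpa [hf0] using this
    have h2 : f t ≤ t := by
      have := hadd t (n - 1 - t) (by omega)
      rw [show t + (n - 1 - t) = n - 1 by omega, hflast] at this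
      omega
    omega
  apply Equiv.ext
  intro j
  have hjt : i0 - (((i0 - j).val : ℕ) : Fin n) = j := by
    rw [Fin.cast_val_eq_self]; ring
  have h1 : (π j).val = (i0 - j).val := by
    conv_lhs => rw [← hjt]
    exact hval (i0 - j).val (by have := (i0 - j).isLt; omega)
  rw [Equiv.subLeft_apply]
  exact Fin.ext h1

end aux3

section aux4
variable {n : ℕ} [NeZero n]

lemma Pbar_subLeft_eq (c i : Fin n) :
    Pbar (Equiv.subLeft c) i = (fun x => c - x) '' Set.Iic (c - i) := by
  ext j
  simp only [Pbar, Set.mem_setOf_eq, Equiv.subLeft_apply, Set.mem_image, Set.mem_Iic]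
  constructor
  · intro h; exact ⟨c - j, h, by rw [sub_sub_cancel]⟩
  · rintro ⟨x, hx, rfl⟩; rwa [sub_sub_cancel]

lemma Pset_subLeft_eq (c i : Fin n) :
    Pset (Equiv.subLeft c) i = (fun x => c - x) '' Set.Iio (c - i) := by
  ext j
  simp only [Pset, Set.mem_setOf_eq, Equiv.subLeft_apply, Set.mem_image, Set.mem_Iio]
  constructor
  · intro h; exact ⟨c - j, h, by rw [sub_sub_cancel]⟩
  · rintro ⟨x, hx, rfl⟩; rwa [sub_sub_cancel]

lemma ncard_Pbar_subLeft (c i : Fin n) :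
    (Pbar (Equiv.subLeft c) i).ncard = (c - i).val + 1 := by
  rw [Pbar_subLeft_eq, Set.ncard_image_of_injective _ sub_right_injective,
    ← Finset.coe_Iic, Set.ncard_coe_finset, Fin.card_Iic]

lemma ncard_Pset_subLeft (c i : Fin n) :
    (Pset (Equiv.subLeft c) i).ncard = (c - i).val := by
  rw [Pset_subLeft_eq, Set.ncard_image_of_injective _ sub_right_injective,
    ← Finset.coe_Iio, Set.ncard_coe_finset, Fin.card_Iio]

end aux4

/-- For `k ∈ ℕ`, the game `v_k(S) = |S|^k` (with the convention `v_k(∅) = 0`,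
so in particular `v_0(S) = 1` for `S ≠ ∅`) on the directed `n`-cycle has Shapley
value `n^(k-1)` for every player `i` (where the exponent `k - 1` is taken in `ℤ`,
so `k = 0` gives `1/n` and `k = 1` gives `1`). -/



theorem cycle_shapley_value_pow (n : ℕ) [NeZero n] (hn : 2 ≤ n) (k : ℕ) (i : Fin n) :
    (1 / (Set.ncard {π : Equiv.Perm (Fin n) | consistent n π} : ℝ)) *
        ∑ π ∈ (Set.toFinite {π : Equiv.Perm (Fin n) | consistent n π}).toFinset,
          ((if (Pbar π i).ncard = 0 then 0 else ((Pbar π i).ncard : ℝ) ^ k)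
            - (if (Pset π i).ncard = 0 then 0 else ((Pset π i).ncard : ℝ) ^ k))
      = (n : ℝ) ^ ((k : ℤ) - 1) := by
  have hnne : n ≠ 0 := NeZero.ne n
  have hn0 : (n : ℝ) ≠ 0 := Nat.cast_ne_zero.mpr hnne
  have hC : {π : Equiv.Perm (Fin n) | consistent n π}
      = Set.range (fun c : Fin n => Equiv.subLeft c) := by
    ext π
    constructor
    · intro h; exact ⟨π.symm 0, (consistent_eq h hn).symm⟩
    · rintro ⟨c, rfl⟩; exact subLeft_consistent c
  have hinj : Function.Injective (fun c : Fin n => Equiv.subLeft c) := by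
    intro a b h
    have := congrArg (fun e : Equiv.Perm (Fin n) => e 0) h
    simpa using this
  have hcard : ({π : Equiv.Perm (Fin n) | consistent n π}).ncard = n := by
    rw [hC, ← Set.image_univ, Set.ncard_image_of_injective _ hinj, Set.ncard_univ,
      Nat.card_eq_fintype_card, Fintype.card_fin]
  have hfin : (Set.toFinite {π : Equiv.Perm (Fin n) | consistent n π}).toFinset
      = Finset.image (fun c : Fin n => Equiv.subLeft c) Finset.univ := by
    ext π
    simp [hC, eq_comm]
  set g : ℕ → ℝ := fun t => if t = 0 then 0 else (t : ℝ) ^ k with hg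
  rw [hcard, hfin, Finset.sum_image (fun a _ b _ h => hinj h)]
  have hterm : ∀ c : Fin n,
      ((if (Pbar (Equiv.subLeft c) i).ncard = 0 then (0:ℝ)
          else ((Pbar (Equiv.subLeft c) i).ncard : ℝ) ^ k)
        - (if (Pset (Equiv.subLeft c) i).ncard = 0 then 0
          else ((Pset (Equiv.subLeft c) i).ncard : ℝ) ^ k))
      = g ((c - i).val + 1) - g ((c - i).val) := by
    intro c
    rw [ncard_Pbar_subLeft, ncard_Pset_subLeft]
  rw [Finset.sum_congr rfl (fun c _ => hterm c)]
  have hre : ∑ c : Fin n, (g ((c - i).val + 1) - g ((c - i).val))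
      = ∑ e : Fin n, (g (e.val + 1) - g e.val) :=
    Fintype.sum_equiv (Equiv.subRight i) _ _ (fun c => rfl)
  rw [hre, Fin.sum_univ_eq_sum_range (fun t => g (t + 1) - g t) n, Finset.sum_range_sub g n]
  rw [hg]
  simp only [hnne, if_false, if_pos rfl, if_true, sub_zero]
  rw [zpow_sub₀ hn0, zpow_natCast, zpow_one]
  field_simp
end
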